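/- Feasibility transfer for the committed reduction (single server): Let S be a finite set of jobs, ω ∈ (0,1), and for each j ∈ S let d̃_j = d_j - ω(d_j - a_j). Suppose there exists a feasible single-server schedule of S in which each job j receives D_j/ω units of processing within [a_j, d̃_j] (at most one job processed at any time). Then there exists a feasible single-server schedule in which each job j receives D_j units of processing within [d̃_j, d_j]. -/

import Mathlib

open MeasureTheory Set

lemma leftmost_piece (A : Set ℝ) (r q c : ℝ) (hc : 0 ≤ c)
    (hrq : r ≤ q) (hsub : A ⊆ Icc r q) (hge : ENNReal.ofReal c ≤ volume A) :
    ∃ e, volume (A ∩ Iic e) = ENNReal.ofReal c := by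
  have hAfin : volume A ≠ ⊤ := by
    refine ne_of_lt (lt_of_le_of_lt (measure_mono hsub) ?_)
    rw [Real.volume_Icc]; exact ENNReal.ofReal_lt_top
  set f : ℝ → ℝ := fun x => (volume (A ∩ Iic x)).toReal with hf
  have hfin : ∀ x, volume (A ∩ Iic x) ≠ ⊤ := fun x =>
    ne_of_lt (lt_of_le_of_lt (measure_mono inter_subset_left) hAfin.lt_top)
  have hmono : ∀ x y, x ≤ y → f x ≤ f y := by
    intro x y hxy
    exact ENNReal.toReal_mono (hfin y)
      (measure_mono (inter_subset_inter_right _ (Iic_subset_Iic.2 hxy)))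
  have hlip : ∀ x y, x ≤ y → f y ≤ f x + (y - x) := by
    intro x y hxy
    have h1 : A ∩ Iic y ⊆ (A ∩ Iic x) ∪ Ioc x y := by
      rintro t ⟨htA, hty⟩
      by_cases h : t ≤ x
      · exact Or.inl ⟨htA, h⟩
      · exact Or.inr ⟨lt_of_not_ge h, hty⟩
    have h2 : volume (A ∩ Iic y) ≤ volume (A ∩ Iic x) + ENNReal.ofReal (y - x) := by
      calc volume (A ∩ Iic y) ≤ volume ((A ∩ Iic x) ∪ Ioc x y) := measure_mono h1
        _ ≤ volume (A ∩ Iic x) + volume (Ioc x y) := measure_union_le _ _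
        _ = volume (A ∩ Iic x) + ENNReal.ofReal (y - x) := by rw [Real.volume_Ioc]
    have hne : volume (A ∩ Iic x) + ENNReal.ofReal (y - x) ≠ ⊤ :=
      ENNReal.add_ne_top.2 ⟨hfin x, ENNReal.ofReal_ne_top⟩
    have := ENNReal.toReal_mono hne h2
    rwa [ENNReal.toReal_add (hfin x) ENNReal.ofReal_ne_top,
      ENNReal.toReal_ofReal (by linarith)] at this
  have hcont : Continuous f := by
    have : LipschitzWith 1 f := by
      refine LipschitzWith.of_dist_le_mul fun x y => ?_
      rw [NNReal.coe_one, one_mul, Real.dist_eq, Real.dist_eq]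
      rcases le_total x y with h | h
      · have h1 := hmono x y h
        have h2 := hlip x y h
        rw [abs_sub_comm, abs_of_nonneg (by linarith), abs_of_nonpos (by linarith)]
        linarith
      · have h1 := hmono y x h
        have h2 := hlip y x h
        rw [abs_of_nonneg (by linarith), abs_of_nonneg (by linarith)]
        linarith
    exact this.continuous
  have hfr : f r = 0 := by
    have h1 : A ∩ Iic r ⊆ {r} := fun x ⟨hxA, hxr⟩ => le_antisymm hxr (hsub hxA).1
    have h2 : volume (A ∩ Iic r) = 0 :=
      le_antisymm ((measure_mono h1).trans_eq (measure_singleton r)) (zero_le)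
    simp [hf, h2]
  have hfq : c ≤ f q := by
    have h1 : A ∩ Iic q = A := inter_eq_left.2 fun x hx => (hsub hx).2
    have h2 := ENNReal.toReal_mono hAfin hge
    rw [ENNReal.toReal_ofReal hc] at h2
    show c ≤ (volume (A ∩ Iic q)).toReal
    rw [h1]; exact h2
  obtain ⟨e, _, hfe⟩ := intermediate_value_Icc hrq hcont.continuousOn
    (⟨hfr ▸ hc, hfq⟩ : c ∈ Icc (f r) (f q))
  exact ⟨e, by rw [← ENNReal.ofReal_toReal (hfin e), show (volume (A ∩ Iic e)).toReal = c from hfe]⟩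

lemma schedule_of_hall {J : Type*} [Fintype J] (r q c : J → ℝ) (hc : ∀ j, 0 ≤ c j)
    (hrq : ∀ j, r j ≤ q j)
    (hall : ∀ u v : ℝ, u ≤ v →
      ∑ j ∈ Finset.univ.filter (fun j => u ≤ r j ∧ q j ≤ v), c j ≤ v - u) :
    ∀ (n : ℕ) (s : Finset J), s.card = n → ∃ T : J → Set ℝ,
      (∀ j, MeasurableSet (T j)) ∧ (∀ j ∈ s, T j ⊆ Icc (r j) (q j)) ∧
      (∀ j ∈ s, volume (T j) = ENNReal.ofReal (c j)) ∧ (∀ j, j ∉ s → T j = ∅) ∧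
      Pairwise (Function.onFun Disjoint T) ∧
      (∀ t : ℝ, (∀ j ∈ s, t ∉ T j) → ∀ j ∈ s, r j ≤ t → ∀ x ∈ T j, x ≤ t) := by
  classical
  intro n
  induction n with
  | zero =>
    intro s hcard
    rw [Finset.card_eq_zero] at hcard
    subst hcard
    refine ⟨fun _ => ∅, fun _ => MeasurableSet.empty, ?_, ?_, fun _ _ => rfl, ?_, ?_⟩
    · simp
    · simp
    · intro i j hij; simp [Function.onFun]
    · simp
  | succ n ih =>
    intro s hcard
    have hs : s.Nonempty := by rw [← Finset.card_pos, hcard]; omega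
    obtain ⟨j0, hj0s, hmax⟩ := s.exists_max_image q hs
    set s' := s.erase j0 with hs'
    have hcard' : s'.card = n := by rw [hs', Finset.card_erase_of_mem hj0s, hcard]; omega
    obtain ⟨T, hTm, hTsub, hTvol, hTout, hTdisj, hTinv⟩ := ih s' hcard'
    set U := ⋃ j ∈ s', T j with hU
    have hUm : MeasurableSet U := s'.measurableSet_biUnion (fun j _ => hTm j)
    have hUmem : ∀ t : ℝ, t ∉ U ↔ ∀ j ∈ s', t ∉ T j := by
      intro t; simp [hU, Set.mem_iUnion]
    set A := Icc (r j0) (q j0) \ U with hA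
    have hAm : MeasurableSet A := measurableSet_Icc.diff hUm
    -- the idle-point argument giving enough room for j0
    set t0 := s.inf' hs r - 1 with ht0
    have ht0lt : ∀ j ∈ s, t0 < r j := fun j hj => by
      have := Finset.inf'_le r hj; rw [ht0]; linarith
    set E := {t : ℝ | t ≤ r j0 ∧ t ∉ U} with hE
    have ht0E : t0 ∈ E := by
      constructor
      · exact le_of_lt (ht0lt j0 hj0s)
      · rw [hUmem]
        intro j hj hmem
        exact absurd ((hTsub j hj hmem).1) (not_le.2 (ht0lt j (Finset.mem_of_mem_erase hj)))
    have hEne : E.Nonempty := ⟨t0, ht0E⟩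
    have hEbdd : BddAbove E := ⟨r j0, fun t ht => ht.1⟩
    set st := sSup E with hst
    have hstr : st ≤ r j0 := csSup_le hEne (fun t ht => ht.1)
    have hbusy : ∀ t, st < t → t ≤ r j0 → t ∈ U := by
      intro t h1 h2
      by_contra h3
      exact absurd (le_csSup hEbdd ⟨h2, h3⟩) (not_le.2 h1)
    set S' := s'.filter (fun j => ∃ x ∈ T j, st < x) with hS'
    have hS'r : ∀ j ∈ S', st ≤ r j := by
      intro j hj
      rw [hS', Finset.mem_filter] at hj
      obtain ⟨hjs', x, hxT, hx⟩ := hj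
      by_contra h
      obtain ⟨t, htE, hrt⟩ := exists_lt_of_lt_csSup hEne (not_le.1 h)
      have htst : t ≤ st := le_csSup hEbdd htE
      have := hTinv t ((hUmem t).1 htE.2) j hjs' (le_of_lt hrt) x hxT
      linarith
    -- Hall at [st, q j0]
    have hj0S' : j0 ∉ S' := fun h => (Finset.mem_erase.1 (Finset.mem_filter.1 h).1).1 rfl
    have hsubF : insert j0 S' ⊆ Finset.univ.filter (fun j => st ≤ r j ∧ q j ≤ q j0) := by
      intro j hj
      rw [Finset.mem_insert] at hj
      rw [Finset.mem_filter]
      rcases hj with rfl | hj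
      · exact ⟨Finset.mem_univ _, hstr, le_refl _⟩
      · exact ⟨Finset.mem_univ _, hS'r j hj,
          hmax j (Finset.mem_of_mem_erase (Finset.mem_filter.1 hj).1)⟩
    have hhall := hall st (q j0) (hstr.trans (hrq j0))
    have hsum : c j0 + ∑ j ∈ S', c j ≤ q j0 - st := by
      have h1 := Finset.sum_le_sum_of_subset_of_nonneg hsubF (fun i _ _ => hc i)
      rw [Finset.sum_insert hj0S'] at h1
      linarith
    -- measure cover
    have hcover : Icc st (q j0) ⊆ (⋃ j ∈ S', T j) ∪ ({st} ∪ (Ioc (r j0) (q j0) \ U)) := by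
      rintro t ⟨h1, h2⟩
      rcases eq_or_lt_of_le h1 with rfl | h1
      · exact Or.inr (Or.inl rfl)
      by_cases hU' : t ∈ U
      · left
        rw [hU, Set.mem_iUnion₂] at hU'
        obtain ⟨j, hj, hjT⟩ := hU'
        exact Set.mem_iUnion₂.2 ⟨j, Finset.mem_filter.2 ⟨hj, t, hjT, h1⟩, hjT⟩
      · right; right
        refine ⟨⟨?_, h2⟩, hU'⟩
        by_contra h
        exact hU' (hbusy t h1 (not_lt.1 h))
    have hroom : ENNReal.ofReal (c j0) ≤ volume A := by
      have hm1 : volume (⋃ j ∈ S', T j) ≤ ENNReal.ofReal (∑ j ∈ S', c j) := by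
        refine (measure_biUnion_finset_le _ _).trans ?_
        rw [ENNReal.ofReal_sum_of_nonneg (fun i _ => hc i)]
        exact Finset.sum_le_sum (fun j hj => le_of_eq
          (hTvol j (Finset.mem_filter.1 hj).1))
      have hm2 : Ioc (r j0) (q j0) \ U ⊆ A := diff_subset_diff_left Ioc_subset_Icc_self
      have hchain : ENNReal.ofReal (q j0 - st) ≤ ENNReal.ofReal (∑ j ∈ S', c j) + volume A := by
        calc ENNReal.ofReal (q j0 - st) = volume (Icc st (q j0)) := (Real.volume_Icc).symm
          _ ≤ volume (⋃ j ∈ S', T j) + volume ({st} ∪ (Ioc (r j0) (q j0) \ U)) :=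
            (measure_mono hcover).trans (measure_union_le _ _)
          _ ≤ volume (⋃ j ∈ S', T j) + (volume ({st} : Set ℝ) + volume (Ioc (r j0) (q j0) \ U)) := by
            gcongr; exact measure_union_le _ _
          _ = volume (⋃ j ∈ S', T j) + volume (Ioc (r j0) (q j0) \ U) := by
            rw [measure_singleton, zero_add]
          _ ≤ ENNReal.ofReal (∑ j ∈ S', c j) + volume A :=
            add_le_add hm1 (measure_mono hm2)
      have h3 : ENNReal.ofReal (∑ j ∈ S', c j) + ENNReal.ofReal (c j0) ≤
          ENNReal.ofReal (∑ j ∈ S', c j) + volume A := by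
        refine le_trans ?_ hchain
        rw [← ENNReal.ofReal_add (Finset.sum_nonneg fun i _ => hc i) (hc j0)]
        exact ENNReal.ofReal_le_ofReal (by linarith)
      exact (ENNReal.add_le_add_iff_left ENNReal.ofReal_ne_top).1 h3
    obtain ⟨e, he⟩ := leftmost_piece A (r j0) (q j0) (c j0) (hc j0) (hrq j0)
      diff_subset hroom
    set Tn := Function.update T j0 (A ∩ Iic e) with hTn
    have hTnj0 : Tn j0 = A ∩ Iic e := Function.update_self _ _ _
    have hTnne : ∀ j, j ≠ j0 → Tn j = T j := fun j hj => Function.update_of_ne hj _ _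
    have hmem_s : ∀ j ∈ s, j = j0 ∨ j ∈ s' := by
      intro j hj
      by_cases h : j = j0
      · exact Or.inl h
      · exact Or.inr (Finset.mem_erase.2 ⟨h, hj⟩)
    have hnotin : ∀ j, j ≠ j0 → j ∉ s' → j ∉ s := by
      intro j h1 h2 h3; exact h2 (Finset.mem_erase.2 ⟨h1, h3⟩)
    have hdisjA : ∀ j ∈ s', Disjoint (A ∩ Iic e) (T j) := by
      intro j hj
      rw [Set.disjoint_left]
      rintro x ⟨⟨_, hxU⟩, _⟩ hxT
      exact hxU (Set.mem_iUnion₂.2 ⟨j, hj, hxT⟩)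
    refine ⟨Tn, ?_, ?_, ?_, ?_, ?_, ?_⟩
    · intro j
      by_cases h : j = j0
      · rw [h, hTnj0]; exact hAm.inter measurableSet_Iic
      · rw [hTnne j h]; exact hTm j
    · intro j hj
      rcases hmem_s j hj with rfl | hj'
      · rw [hTnj0]; exact (Set.inter_subset_left).trans diff_subset
      · rw [hTnne j (Finset.mem_erase.1 hj').1]; exact hTsub j hj'
    · intro j hj
      rcases hmem_s j hj with rfl | hj'
      · rw [hTnj0]; exact he
      · rw [hTnne j (Finset.mem_erase.1 hj').1]; exact hTvol j hj'
    · intro j hj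
      have h1 : j ≠ j0 := fun h => hj (h ▸ hj0s)
      rw [hTnne j h1]
      exact hTout j (fun h => hj (Finset.mem_of_mem_erase h))
    · intro i j hij
      show Disjoint (Tn i) (Tn j)
      by_cases hi : i = j0
      · subst hi
        rw [hTnj0, hTnne j (Ne.symm hij)]
        by_cases hjs : j ∈ s'
        · exact hdisjA j hjs
        · rw [hTout j (fun h => hjs h)]
          · exact disjoint_empty _
      · by_cases hj : j = j0
        · subst hj
          rw [hTnj0, hTnne i hi]
          by_cases his : i ∈ s'
          · exact (hdisjA i his).symm
          · rw [hTout i his]; exact empty_disjoint _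
        · rw [hTnne i hi, hTnne j hj]; exact hTdisj hij
    · intro t ht j hj hrjt x hx
      rcases hmem_s j hj with rfl | hj'
      · rw [hTnj0] at hx
        by_cases hq : q j < t
        · have := ((Set.inter_subset_left hx).1 : x ∈ Icc (r j) (q j)).2
          linarith
        · have htU : t ∉ U := by
            rw [hUmem]
            intro k hk
            have hkj0 : k ≠ j := (Finset.mem_erase.1 hk).1
            have := ht k (Finset.mem_of_mem_erase hk)
            rwa [hTnne k hkj0] at this
          have htA : t ∈ A := ⟨⟨hrjt, not_lt.1 hq⟩, htU⟩
          have hte : ¬ t ≤ e := by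
            intro hte
            exact (ht j hj) (hTnj0 ▸ ⟨htA, hte⟩)
          exact le_trans hx.2 (le_of_not_ge hte)
      · have hjne : j ≠ j0 := (Finset.mem_erase.1 hj').1
        rw [hTnne j hjne] at hx
        refine hTinv t ?_ j hj' hrjt x hx
        intro k hk
        have := ht k (Finset.mem_of_mem_erase hk)
        rwa [hTnne k (Finset.mem_erase.1 hk).1] at this

/-- Feasibility transfer for the committed reduction (single server): if the jobs of `S`
can be feasibly scheduled with demands `D j / ω` inside the windows `[a j, d̃ j]`
(where `d̃ j = d j - ω (d j - a j)`), then they can be feasibly scheduled with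
demands `D j` inside the windows `[d̃ j, d j]`. -/
theorem feasibility_transfer {J : Type*} [Fintype J]
    (D a d : J → ℝ) (ω : ℝ) (hω0 : 0 < ω) (hω1 : ω < 1)
    (hD : ∀ j, 0 < D j) (had : ∀ j, a j < d j)
    (hfeas : ∃ T : J → Set ℝ,
      (∀ j, MeasurableSet (T j)) ∧
      (∀ j, T j ⊆ Set.Icc (a j) (d j - ω * (d j - a j))) ∧
      (∀ j, MeasureTheory.volume (T j) = ENNReal.ofReal (D j / ω)) ∧
      Pairwise (Function.onFun Disjoint T)) :
    ∃ T' : J → Set ℝ,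
      (∀ j, MeasurableSet (T' j)) ∧
      (∀ j, T' j ⊆ Set.Icc (d j - ω * (d j - a j)) (d j)) ∧
      (∀ j, MeasureTheory.volume (T' j) = ENNReal.ofReal (D j)) ∧
      Pairwise (Function.onFun Disjoint T') := by
  classical
  obtain ⟨T, hTm, hTsub, hTvol, hTdisj⟩ := hfeas
  set r : J → ℝ := fun j => d j - ω * (d j - a j) with hr
  -- Hall condition for the original windows [a j, r j]
  have oldHall : ∀ u v : ℝ, u ≤ v →
      ∑ j ∈ Finset.univ.filter (fun j => u ≤ a j ∧ r j ≤ v), (D j / ω) ≤ v - u := by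
    intro u v huv
    set F := Finset.univ.filter (fun j => u ≤ a j ∧ r j ≤ v) with hF
    have hdF : Set.PairwiseDisjoint (↑F : Set J) T := fun i _ j _ hij => hTdisj hij
    have h1 : volume (⋃ j ∈ F, T j) = ∑ j ∈ F, volume (T j) :=
      measure_biUnion_finset hdF (fun i _ => hTm i)
    have h2 : (⋃ j ∈ F, T j) ⊆ Icc u v := by
      refine Set.iUnion₂_subset fun j hj => (hTsub j).trans ?_
      obtain ⟨-, hja, hjr⟩ := Finset.mem_filter.1 hj
      exact Icc_subset_Icc hja hjr
    have h3 : ∑ j ∈ F, volume (T j) ≤ ENNReal.ofReal (v - u) := by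
      rw [← h1, ← Real.volume_Icc]
      exact measure_mono h2
    have h4 : ∑ j ∈ F, volume (T j) = ENNReal.ofReal (∑ j ∈ F, D j / ω) := by
      rw [ENNReal.ofReal_sum_of_nonneg (fun i _ => le_of_lt (div_pos (hD i) hω0))]
      exact Finset.sum_congr rfl (fun j _ => hTvol j)
    rw [h4] at h3
    exact (ENNReal.ofReal_le_ofReal_iff (by linarith)).1 h3
  -- Hall condition for the new windows [r j, d j]
  have newHall : ∀ u v : ℝ, u ≤ v →
      ∑ j ∈ Finset.univ.filter (fun j => u ≤ r j ∧ d j ≤ v), D j ≤ v - u := by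
    intro u v huv
    set u' := (u - (1 - ω) * v) / ω with hu'
    have hu'v : u' ≤ v := by
      rw [hu', div_le_iff₀ hω0]; nlinarith
    have hsubset : Finset.univ.filter (fun j => u ≤ r j ∧ d j ≤ v) ⊆
        Finset.univ.filter (fun j => u' ≤ a j ∧ r j ≤ v) := by
      intro j hj
      obtain ⟨-, hjr, hjd⟩ := Finset.mem_filter.1 hj
      have hjr' : u ≤ d j - ω * (d j - a j) := hjr
      refine Finset.mem_filter.2 ⟨Finset.mem_univ _, ?_, ?_⟩
      · show (u - (1 - ω) * v) / ω ≤ a j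
        rw [div_le_iff₀ hω0]; nlinarith
      · show d j - ω * (d j - a j) ≤ v
        nlinarith [had j]
    have h1 : ∑ j ∈ Finset.univ.filter (fun j => u ≤ r j ∧ d j ≤ v), (D j / ω) ≤ v - u' :=
      le_trans (Finset.sum_le_sum_of_subset_of_nonneg hsubset
        (fun i _ _ => le_of_lt (div_pos (hD i) hω0))) (oldHall u' v hu'v)
    have h2 : ∑ j ∈ Finset.univ.filter (fun j => u ≤ r j ∧ d j ≤ v), D j =
        ω * ∑ j ∈ Finset.univ.filter (fun j => u ≤ r j ∧ d j ≤ v), (D j / ω) := by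
      rw [Finset.mul_sum]
      exact Finset.sum_congr rfl (fun j _ => by field_simp)
    have h3 : ω * (v - u') = v - u := by
      rw [hu']; field_simp; ring
    rw [h2, ← h3]
    exact mul_le_mul_of_nonneg_left h1 hω0.le
  obtain ⟨T', hm, hsub, hvol, -, hdisj, -⟩ := schedule_of_hall r d D
    (fun j => (hD j).le)
    (fun j => by show d j - ω * (d j - a j) ≤ d j; nlinarith [had j])
    newHall (Finset.univ.card) Finset.univ rfl
  exact ⟨T', hm, fun j => hsub j (Finset.mem_univ j),
    fun j => hvol j (Finset.mem_univ j), hdisj⟩
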